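/- Let (H, g) be a finite type pivotal Hopf G-coalgebra over a field k which is unimodular, let μ be a right G-integral with μ_α ≠ 0 for every α ∈ G, and let a = (a_α)_{α∈G} be a G-comodulus for μ. Define the left G-integral μ^l by μ^l_α(x) := μ_α(a_α x), the symmetrised right G-integral μ̃_α(x) := μ_α(g_α x), and the symmetrised left G-integral μ̃^l_α(x) := μ^l_α(g_α⁻¹ x). Then μ̃_α = μ̃^l_α for every α ∈ G (i.e. (H, g) is G-unibalanced) if and only if a_α = g_α² for every α ∈ G. -/
import Mathlib


open scoped TensorProduct

/-- Transport along an equality of indices, as an algebra isomorphism. -/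
def castAlg (k : Type) [CommSemiring k] {G : Type} {H : G → Type}
    [∀ γ : G, Ring (H γ)] [∀ γ : G, Algebra k (H γ)]
    {γ γ' : G} (h : γ = γ') : H γ ≃ₐ[k] H γ' := by
  subst h; exact AlgEquiv.refl

/-- A Hopf `G`-coalgebra over a field `k`. -/
structure HopfGCoalgebra (k G : Type) [Field k] [Group G] (H : G → Type)
    [∀ γ : G, Ring (H γ)] [∀ γ : G, Algebra k (H γ)] where
  Δ : ∀ α β : G, H (α * β) →ₐ[k] (H α ⊗[k] H β)
  ε : H (1 : G) →ₐ[k] k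
  S : ∀ γ : G, H γ →ₗ[k] H γ⁻¹
  coassoc : ∀ (α β γ : G) (x : H (α * β * γ)),
    (TensorProduct.map (Δ α β).toLinearMap LinearMap.id) (Δ (α * β) γ x)
      = (TensorProduct.assoc k (H α) (H β) (H γ)).symm
          ((TensorProduct.map LinearMap.id (Δ β γ).toLinearMap)
            (Δ α (β * γ) (castAlg k (mul_assoc α β γ) x)))
  counit_right : ∀ (α : G) (x : H (α * 1)),
    (TensorProduct.rid k (H α)) ((TensorProduct.map LinearMap.id ε.toLinearMap) (Δ α 1 x))
      = castAlg k (mul_one α) x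
  counit_left : ∀ (α : G) (x : H (1 * α)),
    (TensorProduct.lid k (H α)) ((TensorProduct.map ε.toLinearMap LinearMap.id) (Δ 1 α x))
      = castAlg k (one_mul α) x
  antipode_left : ∀ (α : G) (x : H (α⁻¹ * α)),
    (LinearMap.mul' k (H α))
      ((TensorProduct.map ((castAlg k (inv_inv α)).toLinearMap ∘ₗ S α⁻¹) LinearMap.id)
        (Δ α⁻¹ α x))
      = ε (castAlg k (inv_mul_cancel α) x) • 1
  antipode_right : ∀ (α : G) (x : H (α * α⁻¹)),
    (LinearMap.mul' k (H α))
      ((TensorProduct.map LinearMap.id ((castAlg k (inv_inv α)).toLinearMap ∘ₗ S α⁻¹))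
        (Δ α α⁻¹ x))
      = ε (castAlg k (mul_inv_cancel α) x) • 1

namespace HopfGCoalgebra

variable {k G : Type} [Field k] [Group G] {H : G → Type}
  [∀ γ : G, Ring (H γ)] [∀ γ : G, Algebra k (H γ)]

/-- A family of linear forms is a right `G`-integral. -/
def IsRightIntegral (D : HopfGCoalgebra k G H) (μ : ∀ γ : G, H γ →ₗ[k] k) : Prop :=
  ∀ (α β : G) (x : H (α * β)),
    (TensorProduct.lid k (H β)) ((TensorProduct.map (μ α) LinearMap.id) (D.Δ α β x))
      = μ (α * β) x • 1

/-- A family of linear forms is a left `G`-integral. -/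
def IsLeftIntegral (D : HopfGCoalgebra k G H) (μ : ∀ γ : G, H γ →ₗ[k] k) : Prop :=
  ∀ (α β : G) (x : H (α * β)),
    (TensorProduct.rid k (H α)) ((TensorProduct.map LinearMap.id (μ β)) (D.Δ α β x))
      = μ (α * β) x • 1

/-- A family of invertible elements is a pivot. -/
structure IsPivot (D : HopfGCoalgebra k G H) (g : ∀ γ : G, (H γ)ˣ) : Prop where
  delta : ∀ α β : G, D.Δ α β (g (α * β) : H (α * β)) = (g α : H α) ⊗ₜ[k] (g β : H β)
  counit : D.ε (g 1 : H 1) = 1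
  antipode : ∀ (α : G) (x : H α),
    castAlg k (inv_inv α) (D.S α⁻¹ (D.S α x)) = (g α : H α) * x * ((g α)⁻¹ : (H α)ˣ)

/-- `H` is unimodular if `H₁` admits a nonzero two-sided cointegral. -/
def IsUnimodular (D : HopfGCoalgebra k G H) : Prop :=
  ∃ Λ : H 1, Λ ≠ 0 ∧ ∀ h : H 1, h * Λ = D.ε h • Λ ∧ Λ * h = D.ε h • Λ

/-- A `G`-comodulus for a right `G`-integral `μ`. -/
structure IsComodulus (D : HopfGCoalgebra k G H) (μ : ∀ γ : G, H γ →ₗ[k] k)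
    (a : ∀ γ : G, (H γ)ˣ) : Prop where
  delta : ∀ α β : G, D.Δ α β (a (α * β) : H (α * β)) = (a α : H α) ⊗ₜ[k] (a β : H β)
  counit : D.ε (a 1 : H 1) = 1
  rel : ∀ (α β : G) (x : H (α * β)),
    (TensorProduct.rid k (H α)) ((TensorProduct.map LinearMap.id (μ β)) (D.Δ α β x))
      = μ (α * β) x • (a α : H α)

end HopfGCoalgebra

open HopfGCoalgebra in
/-- A finite type unimodular pivotal Hopf `G`-coalgebra is `G`-unibalanced (its symmetrised
right `G`-integral is also a symmetrised left `G`-integral) if and only if the `G`-comodulus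
is the square of the pivot. -/
theorem unibalanced_iff_comodulus_eq_pivot_sq
    {k G : Type} [Field k] [Group G] {H : G → Type}
    [∀ γ : G, Ring (H γ)] [∀ γ : G, Algebra k (H γ)] [∀ γ : G, FiniteDimensional k (H γ)]
    (D : HopfGCoalgebra k G H) (g : ∀ γ : G, (H γ)ˣ) (hpiv : D.IsPivot g)
    (huni : D.IsUnimodular)
    (μ : ∀ γ : G, H γ →ₗ[k] k) (hμ : D.IsRightIntegral μ) (hμ0 : ∀ γ : G, μ γ ≠ 0)
    (a : ∀ γ : G, (H γ)ˣ) (ha : D.IsComodulus μ a) :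
    (∀ (γ : G) (x : H γ),
        μ γ ((g γ : H γ) * x) = μ γ ((a γ : H γ) * (((g γ)⁻¹ : (H γ)ˣ) * x)))
      ↔ ∀ γ : G, (a γ : H γ) = (g γ : H γ) ^ 2 := by
  constructor
  · intro h γ
    -- the "distortion" unit d δ = a δ * (g δ)⁻¹ * (g δ)⁻¹ satisfies μ (d * y) = μ y
    have hmu_d : ∀ (δ : G) (y : H δ),
        μ δ (((a δ * (g δ)⁻¹ * (g δ)⁻¹ : (H δ)ˣ) : H δ) * y) = μ δ y := by
      intro δ y
      have h1 := h δ ((((g δ)⁻¹ : (H δ)ˣ) : H δ) * y)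
      rw [Units.mul_inv_cancel_left] at h1
      rw [h1]
      congr 1
      simp [Units.val_mul, mul_assoc]
    -- the inverse of the pivot is grouplike
    have hΔginv : ∀ α β : G,
        D.Δ α β ((((g (α * β))⁻¹ : (H (α * β))ˣ) : H (α * β))) =
          (((g α)⁻¹ : (H α)ˣ) : H α) ⊗ₜ[k] (((g β)⁻¹ : (H β)ˣ) : H β) := by
      intro α β
      have h2 : ((g α : H α) ⊗ₜ[k] (g β : H β)) *
          ((((g α)⁻¹ : (H α)ˣ) : H α) ⊗ₜ[k] (((g β)⁻¹ : (H β)ˣ) : H β)) = 1 := by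
        rw [Algebra.TensorProduct.tmul_mul_tmul, Units.mul_inv, Units.mul_inv,
          Algebra.TensorProduct.one_def]
      calc D.Δ α β ↑(g (α * β))⁻¹
          = D.Δ α β ↑(g (α * β))⁻¹ * (((g α : H α) ⊗ₜ[k] (g β : H β)) *
              ((((g α)⁻¹ : (H α)ˣ) : H α) ⊗ₜ[k] (((g β)⁻¹ : (H β)ˣ) : H β))) := by
            rw [h2, mul_one]
        _ = (D.Δ α β ↑(g (α * β))⁻¹ * D.Δ α β ↑(g (α * β))) *
              ((((g α)⁻¹ : (H α)ˣ) : H α) ⊗ₜ[k] (((g β)⁻¹ : (H β)ˣ) : H β)) := by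
            rw [hpiv.delta, mul_assoc]
        _ = (((g α)⁻¹ : (H α)ˣ) : H α) ⊗ₜ[k] (((g β)⁻¹ : (H β)ˣ) : H β) := by
            rw [← map_mul, Units.inv_mul, map_one, one_mul]
    -- d itself is grouplike
    have hΔd : D.Δ 1 γ ((a (1 * γ) * (g (1 * γ))⁻¹ * (g (1 * γ))⁻¹ : (H (1 * γ))ˣ) : H (1 * γ))
        = (((a 1 * (g 1)⁻¹ * (g 1)⁻¹ : (H 1)ˣ) : H 1))
            ⊗ₜ[k] ((a γ * (g γ)⁻¹ * (g γ)⁻¹ : (H γ)ˣ) : H γ) := by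
      simp only [Units.val_mul, map_mul, ha.delta, hΔginv,
        Algebra.TensorProduct.tmul_mul_tmul]
    -- key computation on the tensor factor
    have key : ∀ t : H 1 ⊗[k] H γ,
        (TensorProduct.lid k (H γ)) ((TensorProduct.map (μ 1) LinearMap.id)
          (((((a 1 * (g 1)⁻¹ * (g 1)⁻¹ : (H 1)ˣ) : H 1))
              ⊗ₜ[k] ((a γ * (g γ)⁻¹ * (g γ)⁻¹ : (H γ)ˣ) : H γ)) * t))
        = ((a γ * (g γ)⁻¹ * (g γ)⁻¹ : (H γ)ˣ) : H γ) *
            (TensorProduct.lid k (H γ)) ((TensorProduct.map (μ 1) LinearMap.id) t) := by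
      intro t
      induction t using TensorProduct.induction_on with
      | zero => simp
      | tmul y z =>
          simp only [Algebra.TensorProduct.tmul_mul_tmul, TensorProduct.map_tmul,
            LinearMap.id_coe, id_eq, TensorProduct.lid_tmul, hmu_d 1 y]
          rw [mul_smul_comm]
      | add s t hs ht => simp only [mul_add, map_add, hs, ht]
    -- main identity : μ x • d = μ x • 1
    have main : ∀ x : H (1 * γ),
        μ (1 * γ) x • ((a γ * (g γ)⁻¹ * (g γ)⁻¹ : (H γ)ˣ) : H γ)
          = μ (1 * γ) x • (1 : H γ) := by
      intro x
      have h1 := hμ 1 γ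
        (((a (1 * γ) * (g (1 * γ))⁻¹ * (g (1 * γ))⁻¹ : (H (1 * γ))ˣ) : H (1 * γ)) * x)
      rw [map_mul, hΔd, key, hμ 1 γ x, hmu_d] at h1
      rw [mul_smul_comm, mul_one] at h1
      exact h1
    obtain ⟨x₀, hx₀⟩ : ∃ x : H (1 * γ), μ (1 * γ) x ≠ 0 := by
      by_contra hc
      push_neg at hc
      exact hμ0 (1 * γ) (LinearMap.ext hc)
    have hd1 : ((a γ * (g γ)⁻¹ * (g γ)⁻¹ : (H γ)ˣ) : H γ) = 1 := by
      have h2 : μ (1 * γ) x₀ •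
          (((a γ * (g γ)⁻¹ * (g γ)⁻¹ : (H γ)ˣ) : H γ) - 1) = 0 := by
        rw [smul_sub, main x₀, sub_self]
      rcases smul_eq_zero.mp h2 with h3 | h3
      · exact absurd h3 hx₀
      · exact sub_eq_zero.mp h3
    have h4 : (a γ * (g γ)⁻¹ * (g γ)⁻¹ : (H γ)ˣ) = 1 := Units.ext (by simpa using hd1)
    have h5 : a γ = g γ * g γ := by
      have h6 : a γ * (g γ)⁻¹ = g γ := mul_inv_eq_one.mp h4
      rw [mul_inv_eq_iff_eq_mul] at h6
      exact h6
    rw [h5, Units.val_mul, sq]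
  · intro h γ x
    rw [h γ, sq, mul_assoc, Units.mul_inv_cancel_left]
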